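/- Let T_1, ..., T_M be operators on ℝ^d, each α-averaged for some α ∈ (0,1], let λ ∈ (0, 1/α), let H ≥ 1 be an integer, and set 𝒯̃_λ = (1/M) Σ_{i=1}^M (λT_i + (1−λ)Id)^H. Assume 𝒯̃_λ has a fixed point, and let (y_n) be defined by y_{n+1} = 𝒯̃_λ(y_n) from an arbitrary y_0 ∈ ℝ^d. Then ‖y_{n+1} − y_n‖² = o(1/n); that is, n · ‖y_{n+1} − y_n‖² → 0 as n → ∞. -/

import Mathlib

open Filter

section Aux

variable {E : Type*} [NormedAddCommGroup E] [InnerProductSpace ℝ E]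

/-- Nonexpansive operator. -/
def StmtAux.Nonexp (f : E → E) : Prop := ∀ x y, ‖f x - f y‖ ≤ ‖x - y‖

/-- β-averaged operator. -/
def StmtAux.Avg (β : ℝ) (f : E → E) : Prop :=
  ∃ g : E → E, StmtAux.Nonexp g ∧ ∀ x, f x = β • g x + (1 - β) • x

namespace StmtAux

lemma nat_mul_tendsto_zero (a : ℕ → ℝ) (h0 : ∀ n, 0 ≤ a n)
    (hmono : ∀ n, a (n+1) ≤ a n) (hsum : Summable a) :
    Tendsto (fun n : ℕ => (n : ℝ) * a n) atTop (nhds 0) := by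
  have hanti : Antitone a := antitone_nat_of_succ_le hmono
  have htail : Tendsto (fun m : ℕ => ∑' k, a (k + m)) atTop (nhds 0) :=
    tendsto_sum_nat_add a
  have hdiv : Tendsto (fun n : ℕ => n / 2) atTop atTop :=
    tendsto_atTop_atTop.2 fun b => ⟨2 * b, fun n hn => by omega⟩
  have hcomp : Tendsto (fun n : ℕ => 2 * ∑' k, a (k + n / 2)) atTop (nhds 0) := by
    have := (htail.comp hdiv).const_mul (2 : ℝ)
    simpa using this
  apply squeeze_zero (fun n => mul_nonneg (Nat.cast_nonneg n) (h0 n)) _ hcomp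
  intro n
  have hb : ∀ k, k ∈ Finset.Ico (n / 2) n → a n ≤ a k := by
    intro k hk
    simp only [Finset.mem_Ico] at hk
    exact hanti hk.2.le
  have h1 : (n - n / 2 : ℕ) • a n ≤ ∑ k ∈ Finset.Ico (n / 2) n, a k := by
    have := Finset.card_nsmul_le_sum (Finset.Ico (n / 2) n) a (a n) hb
    simpa [Nat.card_Ico] using this
  have h2 : ∑ k ∈ Finset.Ico (n / 2) n, a k ≤ ∑' k, a (k + n / 2) := by
    rw [Finset.sum_Ico_eq_sum_range]
    simp_rw [add_comm (n / 2)]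
    exact Summable.sum_le_tsum (Finset.range (n - n / 2)) (fun k _ => h0 _)
      ((summable_nat_add_iff (n / 2)).2 hsum)
  have h3 : (n : ℝ) ≤ 2 * (n - n / 2 : ℕ) := by
    have : n ≤ 2 * (n - n / 2) := by omega
    exact_mod_cast this
  calc (n : ℝ) * a n ≤ (2 * (n - n / 2 : ℕ)) * a n := by
        exact mul_le_mul_of_nonneg_right h3 (h0 n)
    _ = 2 * ((n - n / 2 : ℕ) • a n) := by push_cast [nsmul_eq_mul]; ring
    _ ≤ 2 * ∑ k ∈ Finset.Ico (n / 2) n, a k := by linarith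
    _ ≤ 2 * ∑' k, a (k + n / 2) := by linarith

lemma avg_nonexp {β : ℝ} {f : E → E} (hb0 : 0 ≤ β) (hb1 : β ≤ 1)
    (hf : Avg β f) : Nonexp f := by
  obtain ⟨g, hg, he⟩ := hf
  intro x y
  have key : f x - f y = β • (g x - g y) + (1 - β) • (x - y) := by
    rw [he, he, smul_sub, smul_sub]; abel
  rw [key]
  calc ‖β • (g x - g y) + (1 - β) • (x - y)‖
      ≤ ‖β • (g x - g y)‖ + ‖(1 - β) • (x - y)‖ := norm_add_le _ _
    _ ≤ β * ‖x - y‖ + (1 - β) * ‖x - y‖ := by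
        rw [norm_smul, norm_smul, Real.norm_eq_abs, Real.norm_eq_abs,
          abs_of_nonneg hb0, abs_of_nonneg (by linarith)]
        have := hg x y
        nlinarith [norm_nonneg (x - y)]
    _ = ‖x - y‖ := by ring

lemma avg_comp {β₁ β₂ : ℝ} {U V : E → E} (h1 : 0 < β₁) (h1' : β₁ ≤ 1)
    (h2 : 0 < β₂) (h2' : β₂ ≤ 1) (hU : Avg β₁ U) (hV : Avg β₂ V) :
    Avg (1 - (1 - β₁) * (1 - β₂)) (U ∘ V) := by
  have hVne : Nonexp V := avg_nonexp h2.le h2' hV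
  obtain ⟨g, hg, hgU⟩ := hU
  obtain ⟨h, hh, hhV⟩ := hV
  set γ := 1 - (1 - β₁) * (1 - β₂) with hγdef
  have hγeq : γ = β₁ + (1 - β₁) * β₂ := by ring
  have hγ0 : 0 < γ := by nlinarith
  refine ⟨fun x => (β₁ / γ) • g (V x) + ((1 - β₁) * β₂ / γ) • h x, ?_, ?_⟩
  · intro x y
    have key : (β₁ / γ) • g (V x) + ((1 - β₁) * β₂ / γ) • h x -
        ((β₁ / γ) • g (V y) + ((1 - β₁) * β₂ / γ) • h y)
        = (β₁ / γ) • (g (V x) - g (V y)) + ((1 - β₁) * β₂ / γ) • (h x - h y) := by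
      rw [smul_sub, smul_sub]; abel
    rw [key]
    have c1 : (0:ℝ) ≤ β₁ / γ := by positivity
    have c2 : (0:ℝ) ≤ (1 - β₁) * β₂ / γ :=
      div_nonneg (mul_nonneg (by linarith) h2.le) hγ0.le
    calc ‖(β₁ / γ) • (g (V x) - g (V y)) + ((1 - β₁) * β₂ / γ) • (h x - h y)‖
        ≤ ‖(β₁ / γ) • (g (V x) - g (V y))‖ + ‖((1 - β₁) * β₂ / γ) • (h x - h y)‖ :=
          norm_add_le _ _
      _ ≤ (β₁ / γ) * ‖x - y‖ + ((1 - β₁) * β₂ / γ) * ‖x - y‖ := by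
          rw [norm_smul, norm_smul, Real.norm_eq_abs, Real.norm_eq_abs,
            abs_of_nonneg c1, abs_of_nonneg c2]
          have b1 : ‖g (V x) - g (V y)‖ ≤ ‖x - y‖ := le_trans (hg _ _) (hVne _ _)
          have b2 : ‖h x - h y‖ ≤ ‖x - y‖ := hh x y
          exact add_le_add (mul_le_mul_of_nonneg_left b1 c1)
            (mul_le_mul_of_nonneg_left b2 c2)
      _ = ‖x - y‖ := by
          have hsum : β₁ / γ + (1 - β₁) * β₂ / γ = 1 := by
            rw [← add_div]
            rw [← hγeq] at *
            field_simp
          calc (β₁ / γ) * ‖x - y‖ + ((1 - β₁) * β₂ / γ) * ‖x - y‖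
              = (β₁ / γ + (1 - β₁) * β₂ / γ) * ‖x - y‖ := by ring
            _ = ‖x - y‖ := by rw [hsum, one_mul]
  · intro x
    have hUVx : U (V x) = β₁ • g (V x) + (1 - β₁) • (β₂ • h x + (1 - β₂) • x) := by
      rw [hgU, hhV]
    rw [Function.comp_apply, hUVx, smul_add, smul_add, smul_smul, smul_smul,
      smul_smul, smul_smul]
    have e1 : γ * (β₁ / γ) = β₁ := by field_simp
    have e2 : γ * ((1 - β₁) * β₂ / γ) = (1 - β₁) * β₂ := by field_simp
    rw [e1, e2]
    have e3 : (1 - β₁) * (1 - β₂) = 1 - γ := by ring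
    rw [e3]
    abel

lemma avg_iter {β : ℝ} {R : E → E} (hb0 : 0 < β) (hb1 : β ≤ 1) (hR : Avg β R) :
    ∀ H : ℕ, 1 ≤ H → Avg (1 - (1 - β) ^ H) (R^[H]) := by
  intro H
  induction H with
  | zero => omega
  | succ n ih =>
    intro _
    rcases Nat.lt_or_ge n 1 with h | hn
    · have : n = 0 := by omega
      subst this
      simpa [pow_one] using hR
    · have hγ := ih hn
      have hb0' : 0 < 1 - (1 - β) ^ n := by
        have : (1 - β) ^ n < 1 := pow_lt_one₀ (by linarith) (by linarith) (by omega)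
        linarith
      have hb1' : 1 - (1 - β) ^ n ≤ 1 := by
        have : (0:ℝ) ≤ (1 - β) ^ n := pow_nonneg (by linarith) n
        linarith
      have := avg_comp hb0' hb1' hb0 hb1 hγ hR
      rw [Function.iterate_succ]
      convert this using 2
      ring

lemma combo_sq (t : ℝ) (a b : E) :
    ‖t • a + (1 - t) • b‖ ^ 2
      = t * ‖a‖ ^ 2 + (1 - t) * ‖b‖ ^ 2 - t * (1 - t) * ‖a - b‖ ^ 2 := by
  simp only [← real_inner_self_eq_norm_sq, inner_add_add_self, inner_sub_sub_self,
    real_inner_smul_left, real_inner_smul_right]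
  ring

lemma descent {γ : ℝ} {S : E → E} (hγ0 : 0 < γ) (hγ1 : γ < 1)
    (hS : Avg γ S) {xs : E} (hxs : S xs = xs) (x : E) :
    ‖S x - xs‖ ^ 2 + (1 - γ) / γ * ‖S x - x‖ ^ 2 ≤ ‖x - xs‖ ^ 2 := by
  obtain ⟨g, hg, he⟩ := hS
  have hgxs : g xs = xs := by
    have h1 : γ • g xs + (1 - γ) • xs = xs := by rw [← he]; exact hxs
    have h2 : γ • (g xs - xs) = 0 := by
      rw [smul_sub]
      have : (1 - γ) • xs = xs - γ • xs := by rw [sub_smul, one_smul]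
      rw [this] at h1
      have := h1
      abel_nf at this ⊢
      linear_combination (norm := module) this
    have h3 : g xs - xs = 0 := by
      rcases smul_eq_zero.mp h2 with h | h
      · exact absurd h (ne_of_gt hγ0)
      · exact h
    exact sub_eq_zero.mp h3
  have key : S x - xs = γ • (g x - xs) + (1 - γ) • (x - xs) := by
    rw [he]; module
  have key2 : S x - x = γ • (g x - x) := by
    rw [he]; module
  have e1 : ‖S x - xs‖ ^ 2 = γ * ‖g x - xs‖ ^ 2 + (1 - γ) * ‖x - xs‖ ^ 2
      - γ * (1 - γ) * ‖g x - x‖ ^ 2 := by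
    rw [key, combo_sq]
    congr 2
    abel_nf
  have e2 : ‖S x - x‖ ^ 2 = γ ^ 2 * ‖g x - x‖ ^ 2 := by
    rw [key2, norm_smul, Real.norm_eq_abs, abs_of_pos hγ0, mul_pow]
  have e3 : ‖g x - xs‖ ≤ ‖x - xs‖ := by
    have := hg x xs
    rwa [hgxs] at this
  have e4 : ‖g x - xs‖ ^ 2 ≤ ‖x - xs‖ ^ 2 := by
    have h0 : (0:ℝ) ≤ ‖g x - xs‖ := norm_nonneg _
    nlinarith
  have hγne : γ ≠ 0 := ne_of_gt hγ0
  have e5 : (1 - γ) / γ * (γ ^ 2 * ‖g x - x‖ ^ 2) = γ * (1 - γ) * ‖g x - x‖ ^ 2 := by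
    field_simp
  rw [e1, e2, e5]
  nlinarith [mul_le_mul_of_nonneg_left e4 hγ0.le]

lemma avg_mean {M : ℕ} (hM : 0 < M) {γ : ℝ} {U : Fin M → E → E}
    (hU : ∀ i, Avg γ (U i)) : Avg γ (fun x => (M : ℝ)⁻¹ • ∑ i, U i x) := by
  choose W hWne hWeq using hU
  have hMne : (M : ℝ) ≠ 0 := Nat.cast_ne_zero.mpr hM.ne'
  refine ⟨fun x => (M : ℝ)⁻¹ • ∑ i, W i x, ?_, ?_⟩
  · intro x y
    have key : (M : ℝ)⁻¹ • ∑ i, W i x - (M : ℝ)⁻¹ • ∑ i, W i y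
        = (M : ℝ)⁻¹ • ∑ i, (W i x - W i y) := by
      rw [← smul_sub, ← Finset.sum_sub_distrib]
    rw [key, norm_smul, Real.norm_eq_abs, abs_of_nonneg (by positivity)]
    calc (M : ℝ)⁻¹ * ‖∑ i, (W i x - W i y)‖
        ≤ (M : ℝ)⁻¹ * ∑ i, ‖W i x - W i y‖ := by
          gcongr
          exact norm_sum_le _ _
      _ ≤ (M : ℝ)⁻¹ * ∑ _i : Fin M, ‖x - y‖ := by
          gcongr with i _
          exact hWne i x y
      _ = ‖x - y‖ := by
          rw [Finset.sum_const, Finset.card_univ, Fintype.card_fin, nsmul_eq_mul]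
          field_simp
  · intro x
    have hsum : ∑ i, U i x = γ • (∑ i, W i x) + (M : ℝ) • ((1 - γ) • x) := by
      rw [Finset.smul_sum]
      have : (M : ℝ) • ((1 - γ) • x) = ∑ _i : Fin M, (1 - γ) • x := by
        rw [Finset.sum_const, Finset.card_univ, Fintype.card_fin,
          ← Nat.cast_smul_eq_nsmul ℝ]
      rw [this, ← Finset.sum_add_distrib]
      exact Finset.sum_congr rfl fun i _ => hWeq i x
    show (M : ℝ)⁻¹ • ∑ i, U i x = γ • ((M : ℝ)⁻¹ • ∑ i, W i x) + (1 - γ) • x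
    have hMM : (M : ℝ)⁻¹ • ((M : ℝ) • ((1 - γ) • x)) = (1 - γ) • x := by
      rw [smul_smul, inv_mul_cancel₀ hMne, one_smul]
    rw [hsum, smul_add, hMM, smul_smul, smul_smul, mul_comm]

end StmtAux

end Aux

/-- o(1/n) rate, i.e. n·‖y_{n+1} − y_n‖² → 0, for the iterates
of 𝒯̃_λ, assuming 𝒯̃_λ has a fixed point. -/
theorem stmt_4 (d M : ℕ) (hM : 0 < M)
    (T : Fin M → EuclideanSpace ℝ (Fin d) → EuclideanSpace ℝ (Fin d))
    (α : ℝ) (hα0 : 0 < α) (hα1 : α ≤ 1)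
    (hT : ∀ i, ∃ T' : EuclideanSpace ℝ (Fin d) → EuclideanSpace ℝ (Fin d),
      (∀ x y, ‖T' x - T' y‖ ≤ ‖x - y‖) ∧ ∀ x, T i x = α • T' x + (1 - α) • x)
    (l : ℝ) (hl0 : 0 < l) (hl1 : l < 1 / α)
    (H : ℕ) (hH : 1 ≤ H)
    (S : EuclideanSpace ℝ (Fin d) → EuclideanSpace ℝ (Fin d))
    (hS : ∀ x, S x = (M : ℝ)⁻¹ • ∑ i, (fun z => l • T i z + (1 - l) • z)^[H] x)
    (hfix : ∃ xd, S xd = xd)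
    (y : ℕ → EuclideanSpace ℝ (Fin d)) (hy : ∀ n, y (n + 1) = S (y n)) :
    Filter.Tendsto (fun n : ℕ => (n : ℝ) * ‖y (n + 1) - y n‖ ^ 2)
      Filter.atTop (nhds 0) := by
  classical
  obtain ⟨xs, hxs⟩ := hfix
  set β : ℝ := l * α with hβdef
  have hb0 : 0 < β := mul_pos hl0 hα0
  have hb1 : β < 1 := by
    calc β = l * α := rfl
      _ < (1 / α) * α := mul_lt_mul_of_pos_right hl1 hα0
      _ = 1 := by field_simp
  -- each R i is β-averaged
  set R : Fin M → EuclideanSpace ℝ (Fin d) → EuclideanSpace ℝ (Fin d) :=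
    fun i => fun z => l • T i z + (1 - l) • z with hRdef
  have hRavg : ∀ i, StmtAux.Avg β (R i) := by
    intro i
    obtain ⟨T', hT'ne, hT'eq⟩ := hT i
    refine ⟨T', hT'ne, fun x => ?_⟩
    show l • T i x + (1 - l) • x = β • T' x + (1 - β) • x
    rw [hT'eq, hβdef]
    module
  set γ : ℝ := 1 - (1 - β) ^ H with hγdef
  have hγ0 : 0 < γ := by
    have : (1 - β) ^ H < 1 := pow_lt_one₀ (by linarith) (by linarith) (by omega)
    simp only [hγdef]; linarith
  have hγ1 : γ < 1 := by
    have : (0:ℝ) < (1 - β) ^ H := pow_pos (by linarith) H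
    simp only [hγdef]; linarith
  have hUavg : ∀ i, StmtAux.Avg γ ((R i)^[H]) := fun i =>
    StmtAux.avg_iter hb0 hb1.le (hRavg i) H hH
  have hSavg : StmtAux.Avg γ S := by
    have h := StmtAux.avg_mean hM hUavg
    have hSeq : S = fun x => (M : ℝ)⁻¹ • ∑ i, (R i)^[H] x := funext hS
    rwa [← hSeq] at h
  have hSne : StmtAux.Nonexp S := StmtAux.avg_nonexp hγ0.le hγ1.le hSavg
  set a : ℕ → ℝ := fun n => ‖y (n + 1) - y n‖ ^ 2 with hadef
  have h0 : ∀ n, 0 ≤ a n := fun n => sq_nonneg _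
  have hmono : ∀ n, a (n + 1) ≤ a n := by
    intro n
    have h1 : ‖y (n + 2) - y (n + 1)‖ ≤ ‖y (n + 1) - y n‖ := by
      rw [hy (n + 1), hy n]
      exact hSne _ _
    have := norm_nonneg (y (n + 2) - y (n + 1))
    simp only [hadef]
    nlinarith
  set c : ℝ := (1 - γ) / γ with hcdef
  have hc0 : 0 < c := div_pos (by linarith) hγ0
  have hkey : ∀ n, a n ≤ c⁻¹ * (‖y n - xs‖ ^ 2 - ‖y (n + 1) - xs‖ ^ 2) := by
    intro n
    have hd := StmtAux.descent hγ0 hγ1 hSavg hxs (y n)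
    rw [← hy n] at hd
    have : c * a n ≤ ‖y n - xs‖ ^ 2 - ‖y (n + 1) - xs‖ ^ 2 := by
      simp only [hadef]; linarith
    calc a n = c⁻¹ * (c * a n) := by field_simp
      _ ≤ c⁻¹ * (‖y n - xs‖ ^ 2 - ‖y (n + 1) - xs‖ ^ 2) := by
        exact mul_le_mul_of_nonneg_left this (by positivity)
  have hsum : Summable a := by
    apply summable_of_sum_range_le (c := c⁻¹ * ‖y 0 - xs‖ ^ 2) h0
    intro n
    have htel : ∑ k ∈ Finset.range n, a k
        ≤ c⁻¹ * (‖y 0 - xs‖ ^ 2 - ‖y n - xs‖ ^ 2) := by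
      induction n with
      | zero => simp
      | succ m ih =>
        rw [Finset.sum_range_succ]
        have := hkey m
        linarith
    have : (0:ℝ) ≤ c⁻¹ * ‖y n - xs‖ ^ 2 := by positivity
    calc ∑ k ∈ Finset.range n, a k
        ≤ c⁻¹ * (‖y 0 - xs‖ ^ 2 - ‖y n - xs‖ ^ 2) := htel
      _ ≤ c⁻¹ * ‖y 0 - xs‖ ^ 2 := by
        have h2 : c⁻¹ * (‖y 0 - xs‖ ^ 2 - ‖y n - xs‖ ^ 2)
            = c⁻¹ * ‖y 0 - xs‖ ^ 2 - c⁻¹ * ‖y n - xs‖ ^ 2 := by ring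
        linarith [h2]
  exact StmtAux.nat_mul_tendsto_zero a h0 hmono hsum
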